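/- Let N ≥ 10 be an integer, and let a, b, c be three points of the integer lattice ℤ² whose coordinates all lie in the interval [0, N]. If a, b, c are not collinear (as points of ℝ²), then the turning angle of the path (a, b, c) at b, namely π − ∠ a b c, is at least 1/(3N²), where ∠ a b c ∈ [0, π] denotes the (undirected) Euclidean angle at the vertex b of the triangle a b c. -/

import Mathlib

/-- The embedding of the integer lattice `ℤ²` into the Euclidean plane. -/
noncomputable def latticePoint (p : ℤ × ℤ) : EuclideanSpace ℝ (Fin 2) :=
  WithLp.toLp 2 ![(p.1 : ℝ), (p.2 : ℝ)]

/-- Let `N ≥ 10` and let `a, b, c` be points of the integer lattice with coordinates in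
`[0, N]`. If `a, b, c` are not collinear, then the turning angle `π − ∠ a b c` of the
path `(a, b, c)` at `b` is at least `1/(3N²)`. -/
theorem stmt_17 (N : ℕ) (hN : 10 ≤ N) (a b c : ℤ × ℤ)
    (ha : 0 ≤ a.1 ∧ a.1 ≤ (N : ℤ) ∧ 0 ≤ a.2 ∧ a.2 ≤ (N : ℤ))
    (hb : 0 ≤ b.1 ∧ b.1 ≤ (N : ℤ) ∧ 0 ≤ b.2 ∧ b.2 ≤ (N : ℤ))
    (hc : 0 ≤ c.1 ∧ c.1 ≤ (N : ℤ) ∧ 0 ≤ c.2 ∧ c.2 ≤ (N : ℤ))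
    (hcol : ¬ Collinear ℝ ({latticePoint a, latticePoint b, latticePoint c} :
      Set (EuclideanSpace ℝ (Fin 2)))) :
    1 / (3 * (N : ℝ) ^ 2) ≤
      Real.pi - EuclideanGeometry.angle (latticePoint a) (latticePoint b) (latticePoint c) := by
  set u : EuclideanSpace ℝ (Fin 2) := latticePoint a - latticePoint b with hu
  set v : EuclideanSpace ℝ (Fin 2) := latticePoint c - latticePoint b with hv
  set θ := EuclideanGeometry.angle (latticePoint a) (latticePoint b) (latticePoint c) with hθ
  have hθdef : θ = InnerProductGeometry.angle u v := by
    rw [hθ, EuclideanGeometry.angle, hu, hv]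
    simp [vsub_eq_sub]
  -- coordinates
  have hu0 : u 0 = (a.1 : ℝ) - b.1 := by simp [hu, latticePoint]
  have hu1 : u 1 = (a.2 : ℝ) - b.2 := by simp [hu, latticePoint]
  have hv0 : v 0 = (c.1 : ℝ) - b.1 := by simp [hv, latticePoint]
  have hv1 : v 1 = (c.2 : ℝ) - b.2 := by simp [hv, latticePoint]
  have hinner : ∀ x y : EuclideanSpace ℝ (Fin 2),
      (inner ℝ x y : ℝ) = x 0 * y 0 + x 1 * y 1 := by
    intro x y
    simp [PiLp.inner_apply, Fin.sum_univ_two, RCLike.inner_apply, mul_comm]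
  -- integer cross product
  set K : ℤ := (a.1 - b.1) * (c.2 - b.2) - (a.2 - b.2) * (c.1 - b.1) with hK
  have hKcast : (K : ℝ) = u 0 * v 1 - u 1 * v 0 := by
    rw [hu0, hu1, hv0, hv1]; push_cast [hK]; ring
  have hKne : K ≠ 0 := by
    intro h0
    apply hcol
    have h0' : u 0 * v 1 - u 1 * v 0 = 0 := by
      rw [← hKcast, h0]; norm_num
    -- collinear via affine span
    rw [collinear_iff_of_mem (Set.mem_insert_of_mem _ (Set.mem_insert _ _))]
    by_cases huz : u = 0
    · refine ⟨v, ?_⟩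
      intro p hp
      rcases hp with rfl | rfl | rfl
      · refine ⟨0, ?_⟩
        have : latticePoint a = latticePoint b := by
          have := sub_eq_zero.mp (hu ▸ huz :
            latticePoint a - latticePoint b = 0)
          exact this
        simp [this]
      · exact ⟨0, by simp⟩
      · exact ⟨1, by simp [hv]⟩
    · refine ⟨u, ?_⟩
      intro p hp
      -- find t with v = t • u
      have hex : ∃ t : ℝ, v = t • u := by
        by_cases h00 : u 0 = 0
        · have hu1ne : u 1 ≠ 0 := by
            intro h11
            apply huz
            ext i
            fin_cases i <;> simpa [h00, h11]
          refine ⟨v 1 / u 1, ?_⟩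
          have hv0z : v 0 = 0 := by
            have : u 1 * v 0 = 0 := by
              have := h0'
              rw [h00] at this
              linarith
            rcases mul_eq_zero.mp this with h | h
            · exact absurd h hu1ne
            · exact h
          ext i
          fin_cases i <;>
            simp [PiLp.smul_apply, smul_eq_mul, h00, hv0z, div_mul_cancel₀, hu1ne]
        · refine ⟨v 0 / u 0, ?_⟩
          ext i
          fin_cases i
          · simp [PiLp.smul_apply, smul_eq_mul]
            field_simp
          · simp [PiLp.smul_apply, smul_eq_mul]
            field_simp
            nlinarith [h0']
      rcases hex with ⟨t, ht⟩
      rcases hp with rfl | rfl | rfl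
      · exact ⟨1, by simp [hu]⟩
      · exact ⟨0, by simp⟩
      · exact ⟨t, by rw [← ht]; simp [hv]⟩
  -- bound |K| ≥ 1
  have hKabs : (1 : ℝ) ≤ |(K : ℝ)| := by
    have : (1 : ℤ) ≤ |K| := Int.one_le_abs hKne
    calc (1:ℝ) ≤ (|K| : ℤ) := by exact_mod_cast this
      _ = |(K : ℝ)| := by push_cast; ring
  -- norm bounds
  have hNR : (0 : ℝ) < N := by exact_mod_cast lt_of_lt_of_le (by norm_num) hN
  have hbound : ∀ x : EuclideanSpace ℝ (Fin 2),
      x 0 ^ 2 ≤ (N:ℝ)^2 → x 1 ^ 2 ≤ (N:ℝ)^2 → (inner ℝ x x : ℝ) ≤ 2 * (N:ℝ)^2 := by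
    intro x h0 h1
    rw [hinner]
    nlinarith
  have ha1 : (0:ℝ) ≤ (a.1:ℝ) ∧ (a.1:ℝ) ≤ N ∧ (0:ℝ) ≤ (a.2:ℝ) ∧ (a.2:ℝ) ≤ N := by
    obtain ⟨h1, h2, h3, h4⟩ := ha; exact ⟨by exact_mod_cast h1, by exact_mod_cast h2,
      by exact_mod_cast h3, by exact_mod_cast h4⟩
  have hb1 : (0:ℝ) ≤ (b.1:ℝ) ∧ (b.1:ℝ) ≤ N ∧ (0:ℝ) ≤ (b.2:ℝ) ∧ (b.2:ℝ) ≤ N := by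
    obtain ⟨h1, h2, h3, h4⟩ := hb; exact ⟨by exact_mod_cast h1, by exact_mod_cast h2,
      by exact_mod_cast h3, by exact_mod_cast h4⟩
  have hc1 : (0:ℝ) ≤ (c.1:ℝ) ∧ (c.1:ℝ) ≤ N ∧ (0:ℝ) ≤ (c.2:ℝ) ∧ (c.2:ℝ) ≤ N := by
    obtain ⟨h1, h2, h3, h4⟩ := hc; exact ⟨by exact_mod_cast h1, by exact_mod_cast h2,
      by exact_mod_cast h3, by exact_mod_cast h4⟩
  have hiu : (inner ℝ u u : ℝ) ≤ 2 * (N:ℝ)^2 := by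
    apply hbound
    · rw [hu0]; exact sq_le_sq' (by linarith [ha1.1, hb1.2.1]) (by linarith [ha1.2.1, hb1.1])
    · rw [hu1]; exact sq_le_sq' (by linarith [ha1.2.2.1, hb1.2.2.2]) (by linarith [ha1.2.2.2, hb1.2.2.1])
  have hiv : (inner ℝ v v : ℝ) ≤ 2 * (N:ℝ)^2 := by
    apply hbound
    · rw [hv0]; exact sq_le_sq' (by linarith [hc1.1, hb1.2.1]) (by linarith [hc1.2.1, hb1.1])
    · rw [hv1]; exact sq_le_sq' (by linarith [hc1.2.2.1, hb1.2.2.2]) (by linarith [hc1.2.2.2, hb1.2.2.1])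
  set P : ℝ := ‖u‖ * ‖v‖ with hP
  have hPnn : 0 ≤ P := mul_nonneg (norm_nonneg _) (norm_nonneg _)
  have hPsq : P ^ 2 = (inner ℝ u u : ℝ) * (inner ℝ v v : ℝ) := by
    rw [hP, real_inner_self_eq_norm_sq, real_inner_self_eq_norm_sq]; ring
  have hPle : P ≤ 2 * (N:ℝ)^2 := by
    have hsq : P ^ 2 ≤ (2 * (N:ℝ)^2) ^ 2 := by
      rw [hPsq]
      calc (inner ℝ u u : ℝ) * (inner ℝ v v : ℝ) ≤ (2 * (N:ℝ)^2) * (2 * (N:ℝ)^2) :=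
            mul_le_mul hiu hiv (real_inner_self_nonneg) (by positivity)
        _ = (2 * (N:ℝ)^2) ^ 2 := by ring
    calc P = Real.sqrt (P ^ 2) := (Real.sqrt_sq hPnn).symm
      _ ≤ Real.sqrt ((2 * (N:ℝ)^2) ^ 2) := Real.sqrt_le_sqrt hsq
      _ = 2 * (N:ℝ)^2 := Real.sqrt_sq (by positivity)
  -- Lagrange identity
  have hlag : (inner ℝ u u : ℝ) * (inner ℝ v v : ℝ) - (inner ℝ u v : ℝ) * (inner ℝ u v : ℝ)
      = (K:ℝ) ^ 2 := by
    rw [hinner, hinner, hinner, hKcast]; ring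
  have hsinP : Real.sin θ * P = |(K:ℝ)| := by
    rw [hθdef, hP, InnerProductGeometry.sin_angle_mul_norm_mul_norm, hlag,
      Real.sqrt_sq_eq_abs]
  have hθnn : 0 ≤ θ := hθdef ▸ InnerProductGeometry.angle_nonneg u v
  have hθle : θ ≤ Real.pi := hθdef ▸ InnerProductGeometry.angle_le_pi u v
  have hsnn : 0 ≤ Real.sin θ := Real.sin_nonneg_of_nonneg_of_le_pi hθnn hθle
  have hsin_ge : 1 / (2 * (N:ℝ)^2) ≤ Real.sin θ := by
    rw [div_le_iff₀ (by positivity)]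
    calc (1:ℝ) ≤ |(K:ℝ)| := hKabs
      _ = Real.sin θ * P := hsinP.symm
      _ ≤ Real.sin θ * (2 * (N:ℝ)^2) := by
          exact mul_le_mul_of_nonneg_left hPle hsnn
  have hθlt : θ < Real.pi := by
    rcases lt_or_eq_of_le hθle with h | h
    · exact h
    · exact absurd (EuclideanGeometry.collinear_of_angle_eq_pi h) hcol
  have htpos : 0 < Real.pi - θ := by linarith
  have hfin : Real.sin (Real.pi - θ) < Real.pi - θ := Real.sin_lt htpos
  rw [Real.sin_pi_sub] at hfin
  have h23 : 1 / (3 * (N:ℝ)^2) ≤ 1 / (2 * (N:ℝ)^2) := by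
    apply one_div_le_one_div_of_le (by positivity)
    have h0 : (0:ℝ) ≤ (N:ℝ)^2 := by positivity
    linarith
  linarith
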